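/- Let m, k ∈ ℕ and s ∈ ℂ satisfy 2·Re(s) + m > k. Then the function f : ℂ → ℂ defined by f(t) = (|t|²)^s · t^m for t ≠ 0 and f(0) = 0 is of class C^k on ℂ (i.e. k times continuously differentiable in the real sense). The same holds for the function t ↦ (|t|²)^s · t̄^m. -/

import Mathlib

open Complex Asymptotics Filter Topology

local notation "conj'" => starRingEnd ℂ

noncomputable def Gf (s : ℂ) (m n : ℕ) (t : ℂ) : ℂ :=
  if t = 0 then 0 else ((‖t‖ ^ 2 : ℝ) : ℂ) ^ s * t ^ m * (conj' t) ^ n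

lemma norm_Gf {s : ℂ} {m n : ℕ} {t : ℂ} (ht : t ≠ 0) :
    ‖Gf s m n t‖ = ‖t‖ ^ (2 * s.re + (m : ℝ) + n) := by
  have h0 : (0:ℝ) < ‖t‖ := norm_pos_iff.2 ht
  rw [Gf, if_neg ht, norm_mul, norm_mul, norm_pow, norm_pow, RCLike.norm_conj]
  rw [Complex.norm_cpow_eq_rpow_re_of_pos (by positivity)]
  rw [show (‖t‖ ^ 2) ^ s.re = ‖t‖ ^ (2 * s.re) by
    rw [Real.rpow_mul h0.le, Real.rpow_two]]
  rw [← Real.rpow_natCast ‖t‖ m, ← Real.rpow_natCast ‖t‖ n,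
    ← Real.rpow_add h0, ← Real.rpow_add h0]

lemma norm_Gf_le (s : ℂ) (m n : ℕ) {e : ℝ} (he : 0 < e) (h : 2 * s.re + (m:ℝ) + n = e)
    (t : ℂ) : ‖Gf s m n t‖ ≤ ‖t‖ ^ e := by
  rcases eq_or_ne t 0 with rfl | ht
  · simp [Gf, Real.zero_rpow he.ne']
  · rw [norm_Gf ht, h]

lemma tendsto_norm_rpow {e : ℝ} (he : 0 < e) :
    Tendsto (fun t : ℂ => ‖t‖ ^ e) (𝓝 0) (𝓝 0) := by
  have h1 : Tendsto (fun t : ℂ => ‖t‖) (𝓝 0) (𝓝 0) := by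
    simpa using (continuous_norm (E := ℂ)).tendsto 0
  have h2 : ContinuousAt (fun x : ℝ => x ^ e) 0 :=
    Real.continuousAt_rpow_const 0 e (Or.inr he.le)
  have := h2.tendsto.comp h1
  simpa [Function.comp_def, Real.zero_rpow he.ne'] using this

lemma Gf_continuous {s : ℂ} {m n : ℕ} (h : 0 < 2 * s.re + (m:ℝ) + n) :
    Continuous (Gf s m n) := by
  rw [continuous_iff_continuousAt]
  intro t
  rcases eq_or_ne t 0 with rfl | ht
  · rw [ContinuousAt, show Gf s m n 0 = 0 by simp [Gf]]
    exact squeeze_zero_norm (norm_Gf_le s m n h rfl) (tendsto_norm_rpow h)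
  · have heq : (fun z : ℂ => ((‖z‖ ^ 2 : ℝ) : ℂ) ^ s * z ^ m * (conj' z) ^ n) =ᶠ[𝓝 t]
        Gf s m n := by
      filter_upwards [eventually_ne_nhds ht] with z hz
      rw [Gf, if_neg hz]
    refine ContinuousAt.congr ?_ heq
    have h1 : ContinuousAt (fun z : ℂ => ((‖z‖ ^ 2 : ℝ) : ℂ)) t :=
      (Complex.continuous_ofReal.comp ((continuous_norm).pow 2)).continuousAt
    have hc : ContinuousAt (fun z : ℂ => ((‖z‖ ^ 2 : ℝ) : ℂ) ^ s) t :=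
      ContinuousAt.comp (f := fun z : ℂ => ((‖z‖ ^ 2 : ℝ) : ℂ)) (x := t)
        (continuousAt_cpow_const
          (Complex.ofReal_mem_slitPlane.2 (pow_pos (norm_pos_iff.2 ht) 2))) h1
    exact (hc.mul (continuousAt_pow _ _)).mul
      ((continuousAt_pow _ _).comp (Complex.continuous_conj.continuousAt))

lemma ofReal_norm_sq (t : ℂ) : ((‖t‖ ^ 2 : ℝ) : ℂ) = t * conj' t := by
  rw [Complex.mul_conj, Complex.normSq_eq_norm_sq]

noncomputable def Lid : ℂ →L[ℝ] ℂ := ContinuousLinearMap.id ℝ ℂ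
noncomputable def Lconj : ℂ →L[ℝ] ℂ := Complex.conjCLE.toContinuousLinearMap

lemma Gf_hasFDerivAt (s : ℂ) (m n : ℕ) (t : ℂ) (he : 1 < 2 * s.re + (m:ℝ) + n) :
    HasFDerivAt (Gf s m n)
      (((s + m) * Gf (s-1) m (n+1) t) • Lid + ((s + n) * Gf (s-1) (m+1) n t) • Lconj) t := by
  rcases eq_or_ne t 0 with rfl | ht
  · have hz : Gf (s-1) m (n+1) (0:ℂ) = 0 := by simp [Gf]
    have hz' : Gf (s-1) (m+1) n (0:ℂ) = 0 := by simp [Gf]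
    have h0 : HasFDerivAt (Gf s m n) (0 : ℂ →L[ℝ] ℂ) 0 := by
      rw [hasFDerivAt_iff_isLittleO_nhds_zero]
      simp only [show Gf s m n 0 = 0 by simp [Gf], zero_add, sub_zero,
        ContinuousLinearMap.zero_apply]
      rw [isLittleO_iff]
      intro c hc
      have h1 : Tendsto (fun z : ℂ => ‖z‖ ^ (2*s.re + (m:ℝ) + n - 1)) (𝓝 0) (𝓝 0) :=
        tendsto_norm_rpow (by linarith)
      filter_upwards [h1 (Metric.ball_mem_nhds 0 hc)] with z hz1
      rcases eq_or_ne z 0 with rfl | hz0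
      · simp [Gf]
      · rw [norm_Gf hz0, show 2*s.re + (m:ℝ) + n = (2*s.re + (m:ℝ) + n - 1) + 1 by ring,
          Real.rpow_add (norm_pos_iff.2 hz0), Real.rpow_one]
        have : ‖z‖ ^ (2*s.re + (m:ℝ) + n - 1) < c := by
          have h3 := mem_ball_zero_iff.mp hz1
          rwa [Real.norm_eq_abs,
            _root_.abs_of_nonneg (Real.rpow_nonneg (norm_nonneg z) _)] at h3
        have h2 : (0:ℝ) ≤ ‖z‖ := norm_nonneg z
        nlinarith [Real.rpow_nonneg h2 (2*s.re + (m:ℝ) + n - 1)]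
    convert h0 using 1
    ext v
    simp [hz, hz', Lid, Lconj]
  · -- t ≠ 0
    have hw : ((‖t‖ ^ 2 : ℝ) : ℂ) ≠ 0 := by
      simpa using pow_ne_zero 2 (norm_ne_zero_iff.2 ht)
    have hslit : ((‖t‖ ^ 2 : ℝ) : ℂ) ∈ Complex.slitPlane :=
      Complex.ofReal_mem_slitPlane.2 (pow_pos (norm_pos_iff.2 ht) 2)
    have h1 : HasFDerivAt (fun z : ℂ => ((‖z‖ ^ 2 : ℝ) : ℂ))
        ((conj' t) • Lid + t • Lconj) t := by
      have : HasFDerivAt (fun z : ℂ => z * conj' z)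
          ((conj' t) • Lid + t • Lconj) t := by
        have := (hasFDerivAt_id t).mul (Complex.conjCLE.toContinuousLinearMap.hasFDerivAt (x := t))
        refine this.congr_fderiv ?_
        ext v
        simp only [ContinuousLinearMap.add_apply, ContinuousLinearMap.smul_apply,
          ContinuousLinearMap.smulRight_apply, ContinuousLinearMap.coe_id',
          ContinuousLinearEquiv.coe_coe, Complex.conjCLE_apply, smul_eq_mul, id,
          ContinuousLinearMap.id_apply, Lid, Lconj]
        ring
      exact this.congr_of_eventuallyEq (by
        filter_upwards with z using (ofReal_norm_sq z))
    have h2 : HasFDerivAt (fun z : ℂ => z ^ s)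
        ((s * ((‖t‖ ^ 2 : ℝ) : ℂ) ^ (s - 1)) • (ContinuousLinearMap.id ℂ ℂ).restrictScalars ℝ)
        (((‖t‖ ^ 2 : ℝ) : ℂ)) := by
      have := (Complex.hasStrictDerivAt_cpow_const (c := s) hslit).hasDerivAt
      have h' := this.hasFDerivAt.restrictScalars ℝ
      refine h'.congr_fderiv ?_
      ext v
      simp [mul_comm]
    have hcomp := h2.comp t h1
    have h3 : HasFDerivAt (fun z : ℂ => z ^ m)
        (((m : ℂ) * t ^ (m - 1)) • (ContinuousLinearMap.id ℂ ℂ).restrictScalars ℝ) t := by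
      have := (hasDerivAt_pow m t).hasFDerivAt.restrictScalars ℝ
      refine this.congr_fderiv ?_
      ext v
      simp [mul_comm]
    have h4 : HasFDerivAt (fun z : ℂ => (conj' z) ^ n)
        (((n : ℂ) * (conj' t) ^ (n - 1)) • Lconj) t := by
      have hp := ((hasDerivAt_pow n (conj' t)).hasFDerivAt.restrictScalars ℝ)
      have := hp.comp t (Complex.conjCLE.toContinuousLinearMap.hasFDerivAt (x := t))
      refine this.congr_fderiv ?_
      ext v
      simp [Lconj, mul_comm]
    have htot := (hcomp.mul h3).mul h4
    have heq : (fun z : ℂ => ((‖z‖ ^ 2 : ℝ) : ℂ) ^ s * z ^ m * (conj' z) ^ n) =ᶠ[𝓝 t]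
        Gf s m n := by
      filter_upwards [eventually_ne_nhds ht] with z hz
      rw [Gf, if_neg hz]
    refine (htot.congr_of_eventuallyEq heq.symm).congr_fderiv ?_
    have hws' : ((‖t‖ ^ 2 : ℝ) : ℂ) ^ s = (t * conj' t) * ((‖t‖ ^ 2 : ℝ) : ℂ) ^ (s - 1) := by
      nth_rewrite 1 [show s = (s - 1) + 1 by ring]
      rw [Complex.cpow_add _ _ hw, Complex.cpow_one, ofReal_norm_sq t]
      ring
    ext v
    rcases m with - | m <;> rcases n with - | n <;>
    · simp only [ContinuousLinearMap.add_apply, ContinuousLinearMap.smul_apply,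
        ContinuousLinearMap.comp_apply, ContinuousLinearMap.coe_restrictScalars',
        ContinuousLinearMap.id_apply, Gf, if_neg ht, Lid, Lconj, Function.comp,
        ContinuousLinearEquiv.coe_coe, Complex.conjCLE_apply, smul_eq_mul,
        ContinuousLinearMap.coe_id', id, pow_zero, Nat.add_sub_cancel,
        Nat.cast_zero, Nat.cast_add, Nat.cast_one, Nat.cast_succ, map_mul, map_add,
        map_ofNat, Complex.conj_conj, zero_mul, one_mul, mul_one, mul_zero, zero_add,
        add_zero, Function.comp_apply, Pi.mul_apply]
      try rw [hws']
      ring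

lemma Gf_contDiff : ∀ (k : ℕ) (s : ℂ) (m n : ℕ), ((k:ℝ) < 2 * s.re + (m:ℝ) + n) →
    ContDiff ℝ (k : ℕ∞) (Gf s m n) := by
  intro k
  induction k with
  | zero =>
    intro s m n h
    simpa [contDiff_zero] using Gf_continuous (by simpa using h)
  | succ k ih =>
    intro s m n h
    rw [show ((((k:ℕ)+1 : ℕ) : ℕ∞) : WithTop ℕ∞) = (k : ℕ∞) + 1 by push_cast; rfl]
    rw [contDiff_succ_iff_fderiv_apply]
    have he : (1:ℝ) < 2 * s.re + (m:ℝ) + n := by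
      have h0 : (0:ℝ) ≤ (k:ℝ) := Nat.cast_nonneg k
      push_cast at h; linarith
    have hd : ∀ t, HasFDerivAt (Gf s m n)
        (((s + m) * Gf (s-1) m (n+1) t) • Lid + ((s + n) * Gf (s-1) (m+1) n t) • Lconj) t :=
      fun t => Gf_hasFDerivAt s m n t he
    refine ⟨fun t => (hd t).differentiableAt, by simp, fun y => ?_⟩
    have hfe : ∀ t, fderiv ℝ (Gf s m n) t y =
        (s + m) * Gf (s-1) m (n+1) t * y + (s + n) * Gf (s-1) (m+1) n t * (conj' y) := by
      intro t
      rw [(hd t).fderiv]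
      simp [Lid, Lconj]
    simp only [hfe]
    have ih1 := ih (s-1) m (n+1) (by simp only [Complex.sub_re, Complex.one_re]; push_cast at h ⊢; linarith)
    have ih2 := ih (s-1) (m+1) n (by simp only [Complex.sub_re, Complex.one_re]; push_cast at h ⊢; linarith)
    exact (((contDiff_const.mul ih1).mul contDiff_const).add
      (((contDiff_const.mul ih2)).mul contDiff_const))

theorem kernel_contDiff (m k : ℕ) (s : ℂ) (h : 2 * s.re + (m : ℝ) > (k : ℝ)) :
    ContDiff ℝ (k : ℕ∞)
        (fun t : ℂ => if t = 0 then 0 else ((‖t‖ ^ 2 : ℝ) : ℂ) ^ s * t ^ m) ∧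
      ContDiff ℝ (k : ℕ∞)
        (fun t : ℂ => if t = 0 then 0 else ((‖t‖ ^ 2 : ℝ) : ℂ) ^ s * ((starRingEnd ℂ) t) ^ m) := by
  constructor
  · have := Gf_contDiff k s m 0 (by push_cast; linarith)
    convert this using 2 with t
    simp [Gf]
  · have := Gf_contDiff k s 0 m (by push_cast; linarith)
    convert this using 2 with t
    rcases eq_or_ne t 0 with rfl | ht
    · simp [Gf]
    · simp [Gf, ht]
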